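/- There exists an absolute constant c > 0 such that for every finite connected simple graph G = (V,E) and every K ⊆ V with |K| = k ≥ 2: LP_MDN(G,K) ≥ c · σ_K(G) / log₂ k. -/

import Mathlib

open Finset
open scoped Classical

variable {V : Type} [Fintype V] [DecidableEq V]

/-- A cut of a graph on vertex set `V`: a nonempty proper subset of the vertices. -/
def IsCut (C : Finset V) : Prop := C.Nonempty ∧ C ≠ Finset.univ

/-- The unordered pair `e` crosses the cut `C`: exactly one of its endpoints lies in `C`. -/
def Crosses (C : Finset V) (e : Sym2 V) : Prop :=
  ∃ u v, e = s(u, v) ∧ u ∈ C ∧ v ∉ C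

/-- `δ(C)`: the edges of `G` with exactly one endpoint in `C`. -/
noncomputable def cutEdges (G : SimpleGraph V) (C : Finset V) : Finset (Sym2 V) :=
  G.edgeFinset.filter (Crosses C)

/-- `σ_K(G) = min_{v∈V} ∑_{w∈K} d_G(v,w)`: the 1-median cost of `K` in `G`. -/
noncomputable def sigmaK (G : SimpleGraph V) (K : Finset V) : ℕ :=
  sInf { n | ∃ v : V, n = ∑ w ∈ K, G.dist v w }

/-- The optimum value of `LP_MDN(G,K)`: minimize `∑_{e∈E} x_e` subject to
`∑_{e∈δ(C)} x_e ≥ min(|K ∩ C|, |K ∖ C|)` for every cut `C`, `x ≥ 0`. -/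
noncomputable def LPMDN (G : SimpleGraph V) (K : Finset V) : ℝ :=
  sInf { y | ∃ x : Sym2 V → ℝ, (∀ e, 0 ≤ x e) ∧
    (∀ C : Finset V, IsCut C →
      (min (K ∩ C).card (K \ C).card : ℝ) ≤ ∑ e ∈ cutEdges G C, x e) ∧
    y = ∑ e ∈ G.edgeFinset, x e }



set_option linter.unusedSectionVars false
set_option maxHeartbeats 1000000

namespace S7

open SimpleGraph

/-- distance from `v` to the set `T` (0 if `T` is empty). -/
noncomputable def dT (G : SimpleGraph V) (T : Finset V) (v : V) : ℕ :=
  if h : T.Nonempty then T.inf' h (G.dist v) else 0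

/-- ball of radius `r` around `T`. -/
noncomputable def Bl (G : SimpleGraph V) (T : Finset V) (r : ℕ) : Finset V :=
  Finset.univ.filter (fun v => dT G T v ≤ r)

lemma mem_Bl {G : SimpleGraph V} {T : Finset V} {r : ℕ} {v : V} :
    v ∈ Bl G T r ↔ dT G T v ≤ r := by simp [Bl]

lemma dist_lt_card {G : SimpleGraph V} (hG : G.Connected) (u v : V) :
    G.dist u v < Fintype.card V := by
  obtain ⟨p, hp, hl⟩ := hG.exists_path_of_dist u v
  rw [← hl]
  exact hp.length_lt

lemma dT_le {G : SimpleGraph V} {T : Finset V} {t : V} (ht : t ∈ T) (v : V) :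
    dT G T v ≤ G.dist v t := by
  rw [dT, dif_pos ⟨t, ht⟩]
  exact Finset.inf'_le _ ht

lemma dT_lt_card {G : SimpleGraph V} (hG : G.Connected) (T : Finset V) (v : V) :
    dT G T v < Fintype.card V := by
  rw [dT]
  split
  · next h =>
    exact (Finset.inf'_lt_iff h).mpr ⟨h.choose, h.choose_spec, dist_lt_card hG v _⟩
  · have : Nonempty V := hG.nonempty
    exact Fintype.card_pos

lemma dT_lipschitz {G : SimpleGraph V} (hG : G.Connected) {T : Finset V} {a b : V}
    (hab : G.Adj a b) : dT G T a ≤ dT G T b + 1 := by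
  by_cases h : T.Nonempty
  · rw [dT, dT, dif_pos h, dif_pos h]
    obtain ⟨t, ht, heq⟩ := Finset.exists_mem_eq_inf' h (G.dist b)
    rw [heq]
    have h1 : G.dist a b = 1 := SimpleGraph.dist_eq_one_iff_adj.mpr hab
    calc T.inf' h (G.dist a) ≤ G.dist a t := Finset.inf'_le _ ht
      _ ≤ G.dist a b + G.dist b t := hG.dist_triangle
      _ = G.dist b t + 1 := by rw [h1]; ring
  · rw [dT, dif_neg h]
    exact Nat.zero_le _

lemma crosses_pair {C : Finset V} {a b : V} :
    Crosses C s(a, b) ↔ ((a ∈ C ∧ b ∉ C) ∨ (b ∈ C ∧ a ∉ C)) := by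
  constructor
  · rintro ⟨u, v, huv, hu, hv⟩
    rw [Sym2.eq_iff] at huv
    rcases huv with ⟨rfl, rfl⟩ | ⟨rfl, rfl⟩
    · exact Or.inl ⟨hu, hv⟩
    · exact Or.inr ⟨hu, hv⟩
  · rintro (⟨h1, h2⟩ | ⟨h1, h2⟩)
    · exact ⟨a, b, rfl, h1, h2⟩
    · exact ⟨b, a, Sym2.eq_swap, h1, h2⟩


noncomputable def W (p : ℝ) (K T : Finset V) : ℝ := p ^ T.card * (1 - p) ^ (K \ T).card

lemma W_nonneg {p : ℝ} (hp0 : 0 ≤ p) (hp1 : p ≤ 1) (K T : Finset V) : 0 ≤ W p K T := by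
  have h1 : 0 ≤ 1 - p := by linarith
  exact mul_nonneg (pow_nonneg hp0 _) (pow_nonneg h1 _)

lemma sum_pow_powerset (s : Finset V) (a b : ℝ) :
    ∑ t ∈ s.powerset, a ^ t.card * b ^ (s \ t).card = (a + b) ^ s.card := by
  have h := Finset.prod_add (fun _ : V => a) (fun _ : V => b) s
  rw [Finset.prod_const] at h
  rw [h]
  exact Finset.sum_congr rfl fun t _ => by rw [Finset.prod_const, Finset.prod_const]

lemma sum_W (K : Finset V) (p : ℝ) : ∑ T ∈ K.powerset, W p K T = 1 := by
  have := sum_pow_powerset K p (1 - p)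
  simp only [add_sub_cancel, one_pow] at this
  simpa [W] using this

lemma prob_avoid {K S : Finset V} (hS : S ⊆ K) (p : ℝ) :
    ∑ T ∈ K.powerset.filter (fun T => T ∩ S = ∅), W p K T = (1 - p) ^ S.card := by
  have hfil : K.powerset.filter (fun T => T ∩ S = ∅) = (K \ S).powerset := by
    ext T
    simp only [Finset.mem_filter, Finset.mem_powerset, Finset.subset_sdiff,
      ← Finset.disjoint_iff_inter_eq_empty]
  rw [hfil]
  have hcongr : ∀ T ∈ (K \ S).powerset,
      W p K T = (1 - p) ^ S.card * (p ^ T.card * (1 - p) ^ ((K \ S) \ T).card) := by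
    intro T hT
    rw [Finset.mem_powerset] at hT
    have hu : K \ T = S ∪ ((K \ S) \ T) := by
      ext v
      simp only [Finset.mem_sdiff, Finset.mem_union]
      constructor
      · rintro ⟨hvK, hvT⟩
        by_cases hvS : v ∈ S
        · exact Or.inl hvS
        · exact Or.inr ⟨⟨hvK, hvS⟩, hvT⟩
      · rintro (hvS | ⟨⟨hvK, _⟩, hvT⟩)
        · refine ⟨hS hvS, fun hvT => ?_⟩
          have := hT hvT
          simp only [Finset.mem_sdiff] at this
          exact this.2 hvS
        · exact ⟨hvK, hvT⟩
    have hdisj : Disjoint S ((K \ S) \ T) := by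
      refine Finset.disjoint_left.mpr fun v hv hv' => ?_
      simp only [Finset.mem_sdiff] at hv'
      exact hv'.1.2 hv
    have hcard : (K \ T).card = S.card + ((K \ S) \ T).card := by
      rw [hu, Finset.card_union_of_disjoint hdisj]
    rw [W, hcard, pow_add]
    ring
  rw [Finset.sum_congr rfl hcongr, ← Finset.mul_sum, sum_pow_powerset]
  simp

lemma prob_event {K A B : Finset V} (hA : A ⊆ K) (hB : B ⊆ K) (hAB : Disjoint A B) (p : ℝ) :
    ∑ T ∈ K.powerset.filter (fun T => T ∩ B = ∅ ∧ (T ∩ A).Nonempty), W p K T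
      = (1 - p) ^ B.card - (1 - p) ^ (A.card + B.card) := by
  have hsplit : K.powerset.filter (fun T => T ∩ B = ∅)
      = K.powerset.filter (fun T => T ∩ B = ∅ ∧ (T ∩ A).Nonempty)
        ∪ K.powerset.filter (fun T => T ∩ (A ∪ B) = ∅) := by
    ext T
    simp only [Finset.mem_filter, Finset.mem_union, Finset.inter_union_distrib_left,
      Finset.union_eq_empty, Finset.nonempty_iff_ne_empty]
    tauto
  have hdisj : Disjoint (K.powerset.filter (fun T => T ∩ B = ∅ ∧ (T ∩ A).Nonempty))
      (K.powerset.filter (fun T => T ∩ (A ∪ B) = ∅)) := by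
    refine Finset.disjoint_left.mpr fun T hT hT' => ?_
    simp only [Finset.mem_filter, Finset.inter_union_distrib_left, Finset.union_eq_empty,
      Finset.nonempty_iff_ne_empty] at hT hT'
    exact hT.2.2 hT'.2.1
  have h1 := prob_avoid hB p
  have h2 : ∑ T ∈ K.powerset.filter (fun T => T ∩ (A ∪ B) = ∅), W p K T
      = (1 - p) ^ (A.card + B.card) := by
    rw [prob_avoid (Finset.union_subset hA hB) p, Finset.card_union_of_disjoint hAB]
  rw [hsplit, Finset.sum_union hdisj, h2] at h1
  linarith

lemma prob_num (j : ℕ) {a b : ℕ} (ha : 2 ^ j ≤ a) (hb : b ≤ 2 ^ (j + 1) - 1) :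
    (1 / 24 : ℝ) ≤ (1 - (1 / 2) ^ (j + 1) : ℝ) ^ b - (1 - (1 / 2) ^ (j + 1) : ℝ) ^ (a + b) := by
  set p : ℝ := (1 / 2 : ℝ) ^ (j + 1) with hp
  have hn : ((2 : ℝ) ^ (j + 1)) * p = 1 := by
    rw [hp]
    rw [div_pow, one_pow]
    field_simp
  have hppos : 0 < p := by positivity
  have hple : p ≤ 1 / 2 := by
    rw [hp]
    calc ((1:ℝ)/2) ^ (j+1) ≤ (1/2) ^ 1 := by
          apply pow_le_pow_of_le_one <;> norm_num
      _ = 1/2 := pow_one _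
  set q : ℝ := 1 - p with hq
  have hq0 : 0 ≤ q := by rw [hq]; linarith
  have hq1 : q ≤ 1 := by rw [hq]; linarith
  -- exp(-2p) ≤ q
  have hexp : Real.exp (-(2 * p)) ≤ q := by
    have h1 : 2 * p + 1 ≤ Real.exp (2 * p) := Real.add_one_le_exp _
    have h2 : Real.exp (-(2 * p)) = 1 / Real.exp (2 * p) := by
      rw [Real.exp_neg]; ring
    rw [h2]
    rw [div_le_iff₀ (Real.exp_pos _)]
    have h3 : q * (2 * p + 1) ≤ q * Real.exp (2 * p) := by
      apply mul_le_mul_of_nonneg_left h1 hq0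
    refine le_trans ?_ h3
    rw [hq]
    nlinarith
  -- (i) 1/8 ≤ q ^ b
  have hqb : (1 / 8 : ℝ) ≤ q ^ b := by
    have hb' : (b : ℝ) * (2 * p) ≤ 2 := by
      have hbn : b ≤ 2 ^ (j + 1) := le_trans hb (Nat.sub_le _ _)
      have : (b : ℝ) ≤ (2 : ℝ) ^ (j + 1) := by exact_mod_cast hbn
      nlinarith
    calc (1 / 8 : ℝ) ≤ Real.exp (-2) := by
          have h8 : Real.exp 2 ≤ 8 := by
            have h1 := Real.exp_one_lt_d9
            have h2 : Real.exp 2 = Real.exp 1 * Real.exp 1 := by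
              rw [← Real.exp_add]; norm_num
            nlinarith [Real.exp_pos 1]
          have hmul : Real.exp (-2 : ℝ) * Real.exp (2 : ℝ) = 1 := by
            rw [← Real.exp_add]; norm_num
          nlinarith [Real.exp_pos (-2 : ℝ), Real.exp_pos (2 : ℝ)]
      _ ≤ Real.exp (-(b * (2 * p))) := by
          apply Real.exp_le_exp.mpr
          linarith
      _ = Real.exp (-(2 * p)) ^ b := by
          rw [← Real.exp_nat_mul]
          congr 1
          ring
      _ ≤ q ^ b := pow_le_pow_left₀ (Real.exp_pos _).le hexp b
  -- (ii) q ^ a ≤ 2/3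
  have hqa : q ^ a ≤ 2 / 3 := by
    have hm : q ^ a ≤ q ^ (2 ^ j) := pow_le_pow_of_le_one hq0 hq1 ha
    have hmp : ((2 : ℝ) ^ j) * p = 1 / 2 := by
      have : ((2:ℝ) ^ (j+1)) = 2 * 2 ^ j := by ring
      rw [this] at hn
      linarith
    have h15 : (3 / 2 : ℝ) ≤ (1 + p) ^ (2 ^ j) := by
      have := one_add_mul_le_pow (a := p) (by linarith) (2 ^ j)
      have hcast : (1 : ℝ) + (2 ^ j : ℕ) * p = 3 / 2 := by
        push_cast
        rw [hmp]
        norm_num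
      rw [hcast] at this
      exact this
    have hqp : q ^ (2 ^ j) * (1 + p) ^ (2 ^ j) ≤ 1 := by
      rw [← mul_pow]
      have : q * (1 + p) = 1 - p ^ 2 := by rw [hq]; ring
      rw [this]
      apply pow_le_one₀ <;> nlinarith
    have hpos : (0:ℝ) < (1 + p) ^ (2 ^ j) := by positivity
    have : q ^ (2 ^ j) ≤ 1 / (1 + p) ^ (2 ^ j) := by
      rw [le_div_iff₀ hpos]; exact hqp
    have h23 : 1 / (1 + p) ^ (2 ^ j) ≤ 2 / 3 := by
      rw [div_le_div_iff₀ hpos (by norm_num)]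
      linarith
    linarith
  have hsplit : (1 - p) ^ b - (1 - p) ^ (a + b) = q ^ b * (1 - q ^ a) := by
    rw [hq, pow_add]
    ring
  rw [hsplit]
  have h13 : (1/3 : ℝ) ≤ 1 - q ^ a := by linarith
  calc (1/24 : ℝ) = (1/8) * (1/3) := by norm_num
    _ ≤ q ^ b * (1 - q ^ a) := by
        apply mul_le_mul hqb h13 (by norm_num) (by positivity)


lemma cross_radius_unique {G : SimpleGraph V} (hG : G.Connected) {T : Finset V} {a b : V}
    {r r' : ℕ} (hab : G.Adj a b)
    (h1 : Crosses (Bl G T r) s(a, b)) (h2 : Crosses (Bl G T r') s(a, b)) : r = r' := by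
  have la := dT_lipschitz hG (T := T) hab
  have lb := dT_lipschitz hG (T := T) hab.symm
  rw [crosses_pair] at h1 h2
  simp only [mem_Bl] at h1 h2
  omega

/-- the boundaries of the balls around a fixed `T` are edge-disjoint. -/
lemma sum_cut_le {G : SimpleGraph V} (hG : G.Connected) (T : Finset V) (x : Sym2 V → ℝ)
    (hx0 : ∀ e, 0 ≤ x e) (M : ℕ) :
    ∑ r ∈ range M, ∑ e ∈ cutEdges G (Bl G T r), x e ≤ ∑ e ∈ G.edgeFinset, x e := by
  have hdisj : (↑(range M) : Set ℕ).PairwiseDisjoint (fun r => cutEdges G (Bl G T r)) := by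
    intro r _ r' _ hne
    refine Finset.disjoint_left.mpr ?_
    intro e
    induction e using Sym2.ind with
    | _ a b =>
      intro he he'
      obtain ⟨heE, hcr⟩ := Finset.mem_filter.mp he
      obtain ⟨_, hcr'⟩ := Finset.mem_filter.mp he'
      have hab : G.Adj a b := SimpleGraph.mem_edgeFinset.mp heE
      exact hne (cross_radius_unique hG hab hcr hcr')
  rw [← Finset.sum_biUnion hdisj]
  refine Finset.sum_le_sum_of_subset_of_nonneg ?_ (fun e _ _ => hx0 e)
  exact Finset.biUnion_subset.mpr (fun r _ => Finset.filter_subset _ _)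

lemma req_bound {G : SimpleGraph V} {K : Finset V} (x : Sym2 V → ℝ)
    (hx0 : ∀ e, 0 ≤ x e)
    (hxC : ∀ C : Finset V, IsCut C →
      (min (K ∩ C).card (K \ C).card : ℝ) ≤ ∑ e ∈ cutEdges G C, x e)
    (C : Finset V) :
    ((K ∩ C).card * (K \ C).card : ℝ) ≤ (K.card : ℝ) * ∑ e ∈ cutEdges G C, x e := by
  have hsum0 : 0 ≤ ∑ e ∈ cutEdges G C, x e := Finset.sum_nonneg fun e _ => hx0 e
  by_cases hC : IsCut C
  · have h1 := hxC C hC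
    have h2 : (K ∩ C).card * (K \ C).card ≤ K.card * min (K ∩ C).card (K \ C).card := by
      have hle1 : (K ∩ C).card ≤ K.card := card_le_card inter_subset_left
      have hle2 : (K \ C).card ≤ K.card := card_le_card sdiff_subset
      rcases le_total (K ∩ C).card (K \ C).card with h | h
      · rw [min_eq_left h, mul_comm (K.card)]
        exact Nat.mul_le_mul_left _ hle2
      · rw [min_eq_right h]
        exact Nat.mul_le_mul_right _ hle1
    have h2' : ((K ∩ C).card * (K \ C).card : ℝ) ≤
        (K.card : ℝ) * (min (K ∩ C).card (K \ C).card : ℕ) := by exact_mod_cast h2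
    refine h2'.trans ?_
    refine mul_le_mul_of_nonneg_left ?_ (Nat.cast_nonneg _)
    refine le_trans (le_of_eq ?_) h1
    push_cast
    rfl
  · have : (K ∩ C).card * (K \ C).card = 0 := by
      rw [IsCut, not_and_or] at hC
      rcases hC with h | h
      · have : C = ∅ := Finset.not_nonempty_iff_eq_empty.mp h
        subst this; simp
      · push_neg at h
        subst h; simp
    rw [← Nat.cast_mul, this]
    push_cast
    positivity

lemma count_sum {G : SimpleGraph V} {K : Finset V} (T : Finset V) {M : ℕ}
    (hM : ∀ w ∈ K, dT G T w < M) :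
    ∑ r ∈ range M, ((K ∩ Bl G T r).card * (K \ Bl G T r).card)
      = ∑ u ∈ K, ∑ w ∈ K, (dT G T w - dT G T u) := by
  have step1 : ∀ r, (K ∩ Bl G T r).card * (K \ Bl G T r).card
      = ∑ u ∈ K, ∑ w ∈ K, (if dT G T u ≤ r ∧ ¬ dT G T w ≤ r then 1 else 0) := by
    intro r
    have e1 : K ∩ Bl G T r = K.filter (fun v => dT G T v ≤ r) := by
      ext v; simp [mem_Bl, Finset.mem_filter, Finset.mem_inter]
    have e2 : K \ Bl G T r = K.filter (fun v => ¬ dT G T v ≤ r) := by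
      ext v; simp [mem_Bl, Finset.mem_filter, Finset.mem_sdiff]
    rw [e1, e2, Finset.card_filter, Finset.card_filter, Finset.sum_mul_sum]
    refine Finset.sum_congr rfl fun u _ => Finset.sum_congr rfl fun w _ => ?_
    split_ifs <;> simp_all
  calc ∑ r ∈ range M, ((K ∩ Bl G T r).card * (K \ Bl G T r).card)
      = ∑ r ∈ range M, ∑ u ∈ K, ∑ w ∈ K,
          (if dT G T u ≤ r ∧ ¬ dT G T w ≤ r then 1 else 0) :=
        Finset.sum_congr rfl fun r _ => step1 r
    _ = ∑ u ∈ K, ∑ w ∈ K, ∑ r ∈ range M,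
          (if dT G T u ≤ r ∧ ¬ dT G T w ≤ r then 1 else 0) := by
        rw [Finset.sum_comm]
        exact Finset.sum_congr rfl fun u _ => Finset.sum_comm
    _ = ∑ u ∈ K, ∑ w ∈ K, (dT G T w - dT G T u) := by
        refine Finset.sum_congr rfl fun u _ => Finset.sum_congr rfl fun w hw => ?_
        rw [← Finset.card_filter]
        have : (range M).filter (fun r => dT G T u ≤ r ∧ ¬ dT G T w ≤ r)
            = Finset.Ico (dT G T u) (dT G T w) := by
          ext r
          simp only [Finset.mem_filter, Finset.mem_range, Finset.mem_Ico]
          have := hM w hw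
          omega
        rw [this, Nat.card_Ico]


noncomputable def cnt (G : SimpleGraph V) (K : Finset V) (v : V) (r : ℕ) : ℕ :=
  (K.filter (fun t => G.dist v t ≤ r)).card

def rset (G : SimpleGraph V) (K : Finset V) (u w : V) (j : ℕ) : Set ℕ :=
  {r | 2 ^ j ≤ cnt G K u r ∨ 2 ^ j ≤ cnt G K w r ∨ G.dist u w / 3 ≤ r}

noncomputable def rseq (G : SimpleGraph V) (K : Finset V) (u w : V) (j : ℕ) : ℕ :=
  sInf (rset G K u w j)

lemma cap_mem_rset (G : SimpleGraph V) (K : Finset V) (u w : V) (j : ℕ) :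
    G.dist u w / 3 ∈ rset G K u w j :=
  Or.inr (Or.inr le_rfl)

lemma rseq_mem (G : SimpleGraph V) (K : Finset V) (u w : V) (j : ℕ) :
    rseq G K u w j ∈ rset G K u w j :=
  Nat.sInf_mem ⟨_, cap_mem_rset G K u w j⟩

lemma rseq_le_cap (G : SimpleGraph V) (K : Finset V) (u w : V) (j : ℕ) :
    rseq G K u w j ≤ G.dist u w / 3 :=
  Nat.sInf_le (cap_mem_rset G K u w j)

lemma rseq_mono (G : SimpleGraph V) (K : Finset V) (u w : V) (j : ℕ) :
    rseq G K u w j ≤ rseq G K u w (j + 1) := by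
  apply Nat.sInf_le
  have h := rseq_mem G K u w (j + 1)
  have hpow : (2 : ℕ) ^ j ≤ 2 ^ (j + 1) := Nat.pow_le_pow_right (by norm_num) (Nat.le_succ j)
  rcases h with h | h | h
  · exact Or.inl (le_trans hpow h)
  · exact Or.inr (Or.inl (le_trans hpow h))
  · exact Or.inr (Or.inr h)

lemma rseq_zero {G : SimpleGraph V} {K : Finset V} {u : V} (hu : u ∈ K) (w : V) :
    rseq G K u w 0 = 0 := by
  refine Nat.le_antisymm (Nat.sInf_le ?_) (Nat.zero_le _)
  left
  rw [pow_zero, cnt, Nat.one_le_iff_ne_zero, ← Nat.pos_iff_ne_zero, Finset.card_pos]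
  exact ⟨u, Finset.mem_filter.mpr ⟨hu, by simp [SimpleGraph.dist_self]⟩⟩

lemma rseq_last {G : SimpleGraph V} {K : Finset V} {u w : V} (hu : u ∈ K) (hw : w ∈ K)
    {J : ℕ} (hJ : K.card ≤ 2 ^ J) : rseq G K u w J = G.dist u w / 3 := by
  refine Nat.le_antisymm (rseq_le_cap G K u w J) ?_
  have hm := rseq_mem G K u w J
  rcases hm with h | h | h
  · have hsub : K.filter (fun t => G.dist u t ≤ rseq G K u w J) = K :=
      Finset.eq_of_subset_of_card_le (Finset.filter_subset _ _) (le_trans hJ h)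
    have hwmem : w ∈ K.filter (fun t => G.dist u t ≤ rseq G K u w J) := by rw [hsub]; exact hw
    have := (Finset.mem_filter.mp hwmem).2
    exact le_trans (Nat.div_le_self _ _) this
  · have hsub : K.filter (fun t => G.dist w t ≤ rseq G K u w J) = K :=
      Finset.eq_of_subset_of_card_le (Finset.filter_subset _ _) (le_trans hJ h)
    have humem : u ∈ K.filter (fun t => G.dist w t ≤ rseq G K u w J) := by rw [hsub]; exact hu
    have h2 := (Finset.mem_filter.mp humem).2
    rw [SimpleGraph.dist_comm] at h2
    exact le_trans (Nat.div_le_self _ _) h2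
  · exact h

lemma pair_scale {G : SimpleGraph V} (hG : G.Connected) {K : Finset V} {u w : V}
    (hu : u ∈ K) (hw : w ∈ K) (j : ℕ) :
    (1 / 24 : ℝ) * ((rseq G K u w (j + 1) : ℝ) - (rseq G K u w j : ℝ))
      ≤ ∑ T ∈ K.powerset, W ((1 / 2) ^ (j + 1)) K T *
          (((dT G T w - dT G T u : ℕ) : ℝ) + ((dT G T u - dT G T w : ℕ) : ℝ)) := by
  set p : ℝ := (1 / 2 : ℝ) ^ (j + 1) with hp
  have hp0 : 0 ≤ p := by positivity
  have hp1 : p ≤ 1 := by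
    rw [hp]; apply pow_le_one₀ <;> norm_num
  have hRHSpos : ∀ T ∈ K.powerset, 0 ≤ W p K T *
      (((dT G T w - dT G T u : ℕ) : ℝ) + ((dT G T u - dT G T w : ℕ) : ℝ)) := by
    intro T _
    apply mul_nonneg (W_nonneg hp0 hp1 _ _)
    positivity
  by_cases hlt : rseq G K u w j < rseq G K u w (j + 1)
  swap
  · push_neg at hlt
    refine le_trans ?_ (Finset.sum_nonneg hRHSpos)
    have hc : (rseq G K u w (j + 1) : ℝ) ≤ (rseq G K u w j : ℝ) := Nat.cast_le.mpr hlt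
    linarith
  · set r1 := rseq G K u w j with hr1
    set r2 := rseq G K u w (j + 1) with hr2
    have hr2cap : r2 ≤ G.dist u w / 3 := rseq_le_cap G K u w (j + 1)
    obtain ⟨v1, v2, hcase, hv1cnt⟩ :
        ∃ v1 v2, ((v1 = u ∧ v2 = w) ∨ (v1 = w ∧ v2 = u)) ∧ 2 ^ j ≤ cnt G K v1 r1 := by
      rcases rseq_mem G K u w j with h | h | h
      · exact ⟨u, w, Or.inl ⟨rfl, rfl⟩, h⟩
      · exact ⟨w, u, Or.inr ⟨rfl, rfl⟩, h⟩
      · exfalso; omega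
    have hnot : (r2 - 1) ∉ rset G K u w (j + 1) :=
      Nat.notMem_of_lt_sInf (show r2 - 1 < sInf (rset G K u w (j + 1)) from by
        rw [← show rseq G K u w (j + 1) = sInf (rset G K u w (j + 1)) from rfl, ← hr2]; omega)
    rw [rset, Set.mem_setOf_eq] at hnot
    push_neg at hnot
    have hv2cnt : cnt G K v2 (r2 - 1) < 2 ^ (j + 1) := by
      rcases hcase with ⟨h1, h2⟩ | ⟨h1, h2⟩
      · rw [h2]; omega
      · rw [h2]; omega
    clear_value r1 r2
    set A := K.filter (fun t => G.dist v1 t ≤ r1) with hA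
    set B := K.filter (fun t => G.dist v2 t ≤ r2 - 1) with hB
    have hAcard : 2 ^ j ≤ A.card := hv1cnt
    have hBcard : B.card ≤ 2 ^ (j + 1) - 1 := Nat.le_sub_one_of_lt hv2cnt
    have hAK : A ⊆ K := Finset.filter_subset _ _
    have hBK : B ⊆ K := Finset.filter_subset _ _
    have hdisjAB : Disjoint A B := by
      rw [Finset.disjoint_left]
      intro z hzA hzB
      have h1 := (Finset.mem_filter.mp hzA).2
      have h2 := (Finset.mem_filter.mp hzB).2
      have htri : G.dist v1 v2 ≤ G.dist v1 z + G.dist z v2 := hG.dist_triangle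
      have hcm : G.dist z v2 = G.dist v2 z := SimpleGraph.dist_comm
      have hD : G.dist v1 v2 = G.dist u w := by
        rcases hcase with ⟨ha, hb⟩ | ⟨ha, hb⟩
        · rw [ha, hb]
        · rw [ha, hb]; exact SimpleGraph.dist_comm
      omega
    have hev := prob_event hAK hBK hdisjAB p
    have hnum := prob_num j hAcard hBcard
    rw [← hp] at hnum
    have hΔ0 : (0:ℝ) ≤ (r2 : ℝ) - r1 := by
      have : (r1 : ℝ) ≤ (r2 : ℝ) := Nat.cast_le.mpr (le_of_lt hlt)
      linarith
    have hpoint : ∀ T ∈ K.powerset.filter (fun T => T ∩ B = ∅ ∧ (T ∩ A).Nonempty),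
        ((r2 : ℝ) - r1) ≤
          ((dT G T w - dT G T u : ℕ) : ℝ) + ((dT G T u - dT G T w : ℕ) : ℝ) := by
      intro T hT
      have hT' := Finset.mem_filter.mp hT
      have hTK : T ⊆ K := Finset.mem_powerset.mp hT'.1
      have hTB : T ∩ B = ∅ := hT'.2.1
      obtain ⟨t, htTA⟩ := hT'.2.2
      have htT : t ∈ T := (Finset.mem_inter.mp htTA).1
      have htA : t ∈ A := (Finset.mem_inter.mp htTA).2
      have hTne : T.Nonempty := ⟨t, htT⟩
      have hd1 : dT G T v1 ≤ r1 := le_trans (dT_le htT v1) (Finset.mem_filter.mp htA).2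
      have hd2 : r2 ≤ dT G T v2 := by
        by_contra hcon
        push_neg at hcon
        rw [dT, dif_pos hTne] at hcon
        obtain ⟨t0, ht0, heq⟩ := Finset.exists_mem_eq_inf' hTne (G.dist v2)
        rw [heq] at hcon
        have ht0B : t0 ∈ B := Finset.mem_filter.mpr ⟨hTK ht0, by omega⟩
        have : t0 ∈ T ∩ B := Finset.mem_inter.mpr ⟨ht0, ht0B⟩
        rw [hTB] at this
        exact absurd this (Finset.notMem_empty t0)
      have hnat : r2 - r1 ≤ (dT G T w - dT G T u) + (dT G T u - dT G T w) := by
        rcases hcase with ⟨ha, hb⟩ | ⟨ha, hb⟩ <;> subst ha <;> subst hb <;> omega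
      have hcast : ((r2 - r1 : ℕ) : ℝ) = (r2 : ℝ) - r1 :=
        Nat.cast_sub (le_of_lt hlt)
      calc ((r2 : ℝ) - r1) = ((r2 - r1 : ℕ) : ℝ) := hcast.symm
        _ ≤ (((dT G T w - dT G T u) + (dT G T u - dT G T w) : ℕ) : ℝ) := Nat.cast_le.mpr hnat
        _ = ((dT G T w - dT G T u : ℕ) : ℝ) + ((dT G T u - dT G T w : ℕ) : ℝ) := by push_cast; ring
    calc (1 / 24 : ℝ) * ((r2 : ℝ) - r1)
        ≤ ((1 - p) ^ B.card - (1 - p) ^ (A.card + B.card)) * ((r2 : ℝ) - r1) :=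
          mul_le_mul_of_nonneg_right hnum hΔ0
      _ = ∑ T ∈ K.powerset.filter (fun T => T ∩ B = ∅ ∧ (T ∩ A).Nonempty),
            W p K T * ((r2 : ℝ) - r1) := by rw [← hev, Finset.sum_mul]
      _ ≤ ∑ T ∈ K.powerset.filter (fun T => T ∩ B = ∅ ∧ (T ∩ A).Nonempty),
            W p K T * (((dT G T w - dT G T u : ℕ) : ℝ) + ((dT G T u - dT G T w : ℕ) : ℝ)) := by
          refine Finset.sum_le_sum fun T hT => ?_
          exact mul_le_mul_of_nonneg_left (hpoint T hT) (W_nonneg hp0 hp1 _ _)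
      _ ≤ ∑ T ∈ K.powerset, W p K T *
            (((dT G T w - dT G T u : ℕ) : ℝ) + ((dT G T u - dT G T w : ℕ) : ℝ)) := by
          refine Finset.sum_le_sum_of_subset_of_nonneg (Finset.filter_subset _ _) ?_
          exact fun T hT _ => hRHSpos T hT


lemma two_endpoints {G : SimpleGraph V} {e : Sym2 V} (he : e ∈ G.edgeFinset) :
    (Finset.univ.filter (fun w : V => w ∈ e)).card = 2 := by
  induction e using Sym2.ind with
  | _ a b =>
    have hab : G.Adj a b := SimpleGraph.mem_edgeFinset.mp he
    have hset : Finset.univ.filter (fun w : V => w ∈ s(a, b)) = {a, b} := by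
      ext v
      simp [Sym2.mem_iff]
    rw [hset, Finset.card_insert_of_notMem (by simp [hab.ne]), Finset.card_singleton]

lemma singleton_bound {G : SimpleGraph V} {K : Finset V} (hK : 2 ≤ K.card)
    (x : Sym2 V → ℝ) (hx0 : ∀ e, 0 ≤ x e)
    (hxC : ∀ C : Finset V, IsCut C →
      (min (K ∩ C).card (K \ C).card : ℝ) ≤ ∑ e ∈ cutEdges G C, x e) :
    (K.card : ℝ) ≤ 2 * ∑ e ∈ G.edgeFinset, x e := by
  have hone : ∀ w ∈ K, (1 : ℝ) ≤ ∑ e ∈ cutEdges G {w}, x e := by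
    intro w hw
    have hcut : IsCut ({w} : Finset V) := by
      constructor
      · exact ⟨w, Finset.mem_singleton_self w⟩
      · intro h
        have h1 := Finset.card_le_univ K
        have h2 := congrArg Finset.card h
        simp only [Finset.card_singleton, Finset.card_univ] at h2
        omega
    have hbound := hxC {w} hcut
    have h1 : K ∩ {w} = {w} := Finset.inter_eq_right.mpr (Finset.singleton_subset_iff.mpr hw)
    have h2 : (K \ {w}).card = K.card - 1 := by
      rw [Finset.card_sdiff_of_subset (Finset.singleton_subset_iff.mpr hw), Finset.card_singleton]
    rw [h1, Finset.card_singleton, h2] at hbound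
    refine le_trans (le_min (by norm_num) ?_) hbound
    have h3 : 1 ≤ K.card - 1 := by omega
    exact_mod_cast h3
  have hcrossw : ∀ w : V, cutEdges G {w} ⊆ G.edgeFinset.filter (fun e => w ∈ e) := by
    intro w e he
    obtain ⟨heE, hcr⟩ := Finset.mem_filter.mp he
    refine Finset.mem_filter.mpr ⟨heE, ?_⟩
    obtain ⟨a, b, hab, ha, hb⟩ := hcr
    rw [hab, Sym2.mem_iff]
    exact Or.inl (Finset.mem_singleton.mp ha).symm
  calc (K.card : ℝ) = ∑ _w ∈ K, (1 : ℝ) := by simp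
    _ ≤ ∑ w ∈ K, ∑ e ∈ cutEdges G {w}, x e := Finset.sum_le_sum hone
    _ ≤ ∑ w ∈ Finset.univ, ∑ e ∈ cutEdges G {w}, x e :=
        Finset.sum_le_sum_of_subset_of_nonneg (Finset.subset_univ K)
          (fun w _ _ => Finset.sum_nonneg fun e _ => hx0 e)
    _ ≤ ∑ w ∈ Finset.univ, ∑ e ∈ G.edgeFinset.filter (fun e => w ∈ e), x e :=
        Finset.sum_le_sum fun w _ =>
          Finset.sum_le_sum_of_subset_of_nonneg (hcrossw w) (fun e _ _ => hx0 e)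
    _ = ∑ w ∈ Finset.univ, ∑ e ∈ G.edgeFinset, (if w ∈ e then x e else 0) :=
        Finset.sum_congr rfl fun w _ => Finset.sum_filter _ _
    _ = ∑ e ∈ G.edgeFinset, ∑ w ∈ Finset.univ, (if w ∈ e then x e else 0) := Finset.sum_comm
    _ = ∑ e ∈ G.edgeFinset, 2 * x e := by
        refine Finset.sum_congr rfl fun e he => ?_
        rw [← Finset.sum_filter, Finset.sum_const, two_endpoints he]
        rw [nsmul_eq_mul]
        norm_num
    _ = 2 * ∑ e ∈ G.edgeFinset, x e := by rw [Finset.mul_sum]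

lemma cross_of_walk {G : SimpleGraph V} {C : Finset V} :
    ∀ {a b : V} (_p : G.Walk a b), a ∈ C → b ∉ C → ∃ s t, G.Adj s t ∧ s ∈ C ∧ t ∉ C := by
  intro a b p
  induction p with
  | nil => intro h1 h2; exact absurd h1 h2
  | @cons x y z hadj q ih =>
    intro h1 h2
    by_cases hy : y ∈ C
    · exact ih hy h2
    · exact ⟨x, y, hadj, h1, hy⟩

lemma exists_cross_edge {G : SimpleGraph V} (hG : G.Connected) {C : Finset V}
    (h1 : C.Nonempty) (h2 : C ≠ Finset.univ) :
    ∃ a b, G.Adj a b ∧ a ∈ C ∧ b ∉ C := by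
  obtain ⟨u, hu⟩ := h1
  have h3 : ∃ v, v ∉ C := by
    by_contra h
    push_neg at h
    exact h2 (Finset.eq_univ_iff_forall.mpr h)
  obtain ⟨v, hv⟩ := h3
  obtain ⟨p⟩ := hG.preconnected u v
  exact cross_of_walk p hu hv


lemma per_T_bound {G : SimpleGraph V} (hG : G.Connected) {K : Finset V}
    (x : Sym2 V → ℝ) (hx0 : ∀ e, 0 ≤ x e)
    (hxC : ∀ C : Finset V, IsCut C →
      (min (K ∩ C).card (K \ C).card : ℝ) ≤ ∑ e ∈ cutEdges G C, x e)
    (T : Finset V) :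
    ∑ u ∈ K, ∑ w ∈ K, ((dT G T w - dT G T u : ℕ) : ℝ)
      ≤ (K.card : ℝ) * ∑ e ∈ G.edgeFinset, x e := by
  have hM : ∀ w ∈ K, dT G T w < Fintype.card V := fun w _ => dT_lt_card hG T w
  have h9 := count_sum (G := G) (K := K) T hM
  have hcast : ∑ u ∈ K, ∑ w ∈ K, ((dT G T w - dT G T u : ℕ) : ℝ)
      = ∑ r ∈ range (Fintype.card V),
          ((K ∩ Bl G T r).card : ℝ) * ((K \ Bl G T r).card : ℝ) := by
    have h := congrArg (fun n : ℕ => (n : ℝ)) h9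
    simp only [Nat.cast_sum, Nat.cast_mul] at h
    exact h.symm
  rw [hcast]
  calc ∑ r ∈ range (Fintype.card V), ((K ∩ Bl G T r).card : ℝ) * ((K \ Bl G T r).card : ℝ)
      ≤ ∑ r ∈ range (Fintype.card V), (K.card : ℝ) * ∑ e ∈ cutEdges G (Bl G T r), x e :=
        Finset.sum_le_sum fun r _ => req_bound x hx0 hxC (Bl G T r)
    _ = (K.card : ℝ) * ∑ r ∈ range (Fintype.card V), ∑ e ∈ cutEdges G (Bl G T r), x e :=
        (Finset.mul_sum _ _ _).symm
    _ ≤ (K.card : ℝ) * ∑ e ∈ G.edgeFinset, x e :=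
        mul_le_mul_of_nonneg_left (sum_cut_le hG T x hx0 _) (Nat.cast_nonneg _)

noncomputable def Phi (G : SimpleGraph V) (T : Finset V) (u w : V) : ℝ :=
  ((dT G T w - dT G T u : ℕ) : ℝ) + ((dT G T u - dT G T w : ℕ) : ℝ)

lemma Phi_nonneg (G : SimpleGraph V) (T : Finset V) (u w : V) : 0 ≤ Phi G T u w := by
  rw [Phi]; positivity

theorem key_bound {G : SimpleGraph V} (hG : G.Connected) {K : Finset V} (hK : 2 ≤ K.card)
    (x : Sym2 V → ℝ) (hx0 : ∀ e, 0 ≤ x e)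
    (hxC : ∀ C : Finset V, IsCut C →
      (min (K ∩ C).card (K \ C).card : ℝ) ≤ ∑ e ∈ cutEdges G C, x e) :
    (sigmaK G K : ℝ) ≤ 296 * Real.logb 2 K.card * ∑ e ∈ G.edgeFinset, x e := by
  set X := ∑ e ∈ G.edgeFinset, x e with hX
  have hX0 : 0 ≤ X := Finset.sum_nonneg fun e _ => hx0 e
  set J := Nat.clog 2 K.card with hJdef
  have hJ1 : 1 ≤ J := Nat.clog_pos (by norm_num) hK
  have hJk : K.card ≤ 2 ^ J := Nat.le_pow_clog (by norm_num) K.card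
  -- Step A : per-scale expectation bound (unfactored form)
  have stepA : ∀ j : ℕ, ∑ T ∈ K.powerset, ∑ u ∈ K, ∑ w ∈ K,
      (W ((1/2 : ℝ)^(j+1)) K T * Phi G T u w) ≤ 2 * (K.card : ℝ) * X := by
    intro j
    have hp0 : (0:ℝ) ≤ (1/2 : ℝ)^(j+1) := by positivity
    have hp1 : ((1/2 : ℝ))^(j+1) ≤ 1 := by
      apply pow_le_one₀ <;> norm_num
    have hfac : ∑ T ∈ K.powerset, ∑ u ∈ K, ∑ w ∈ K,
        (W ((1/2 : ℝ)^(j+1)) K T * Phi G T u w)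
        = ∑ T ∈ K.powerset, W ((1/2 : ℝ)^(j+1)) K T * (∑ u ∈ K, ∑ w ∈ K, Phi G T u w) := by
      refine Finset.sum_congr rfl fun T _ => ?_
      rw [Finset.mul_sum]
      refine Finset.sum_congr rfl fun u _ => ?_
      rw [Finset.mul_sum]
    rw [hfac]
    have hper : ∀ T : Finset V, ∑ u ∈ K, ∑ w ∈ K, Phi G T u w ≤ 2 * (K.card : ℝ) * X := by
      intro T
      have hsplit : ∑ u ∈ K, ∑ w ∈ K, Phi G T u w
          = (∑ u ∈ K, ∑ w ∈ K, ((dT G T w - dT G T u : ℕ) : ℝ))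
            + ∑ u ∈ K, ∑ w ∈ K, ((dT G T u - dT G T w : ℕ) : ℝ) := by
        simp only [Phi]
        rw [← Finset.sum_add_distrib]
        exact Finset.sum_congr rfl fun u _ => Finset.sum_add_distrib
      have hswap : ∑ u ∈ K, ∑ w ∈ K, ((dT G T u - dT G T w : ℕ) : ℝ)
          = ∑ u ∈ K, ∑ w ∈ K, ((dT G T w - dT G T u : ℕ) : ℝ) := Finset.sum_comm
      rw [hsplit, hswap]
      have := per_T_bound hG x hx0 hxC T
      linarith
    calc ∑ T ∈ K.powerset, W ((1/2 : ℝ)^(j+1)) K T * (∑ u ∈ K, ∑ w ∈ K, Phi G T u w)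
        ≤ ∑ T ∈ K.powerset, W ((1/2 : ℝ)^(j+1)) K T * (2 * (K.card : ℝ) * X) := by
          refine Finset.sum_le_sum fun T _ => ?_
          exact mul_le_mul_of_nonneg_left (hper T) (W_nonneg hp0 hp1 _ _)
      _ = 2 * (K.card : ℝ) * X := by rw [← Finset.sum_mul, sum_W]; ring
  -- Step B : per-pair telescope
  have stepB : ∀ u ∈ K, ∀ w ∈ K,
      (1/24 : ℝ) * ((G.dist u w / 3 : ℕ) : ℝ)
        ≤ ∑ j ∈ range J, ∑ T ∈ K.powerset,
            (W ((1/2 : ℝ)^(j+1)) K T * Phi G T u w) := by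
    intro u hu w hw
    have htel : ∑ j ∈ range J, ((rseq G K u w (j+1) : ℝ) - (rseq G K u w j : ℝ))
        = ((G.dist u w / 3 : ℕ) : ℝ) := by
      rw [Finset.sum_range_sub (f := fun j => (rseq G K u w j : ℝ))]
      rw [rseq_last hu hw hJk, rseq_zero hu w]
      simp
    calc (1/24 : ℝ) * ((G.dist u w / 3 : ℕ) : ℝ)
        = ∑ j ∈ range J, (1/24 : ℝ) * ((rseq G K u w (j+1) : ℝ) - (rseq G K u w j : ℝ)) := by
          rw [← Finset.mul_sum, htel]
      _ ≤ ∑ j ∈ range J, ∑ T ∈ K.powerset,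
            (W ((1/2 : ℝ)^(j+1)) K T * Phi G T u w) := by
          refine Finset.sum_le_sum fun j _ => ?_
          have := pair_scale hG hu hw j
          simpa only [Phi] using this
  -- Step C : sum over pairs and exchange sums
  have stepC : (1/24 : ℝ) * (∑ u ∈ K, ∑ w ∈ K, ((G.dist u w / 3 : ℕ) : ℝ))
      ≤ (J : ℝ) * (2 * (K.card : ℝ) * X) := by
    have hexch : ∑ u ∈ K, ∑ w ∈ K, ∑ j ∈ range J, ∑ T ∈ K.powerset,
          (W ((1/2 : ℝ)^(j+1)) K T * Phi G T u w)
        = ∑ j ∈ range J, ∑ T ∈ K.powerset, ∑ u ∈ K, ∑ w ∈ K,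
          (W ((1/2 : ℝ)^(j+1)) K T * Phi G T u w) := by
      calc ∑ u ∈ K, ∑ w ∈ K, ∑ j ∈ range J, ∑ T ∈ K.powerset,
            (W ((1/2 : ℝ)^(j+1)) K T * Phi G T u w)
          = ∑ u ∈ K, ∑ j ∈ range J, ∑ w ∈ K, ∑ T ∈ K.powerset,
            (W ((1/2 : ℝ)^(j+1)) K T * Phi G T u w) :=
            Finset.sum_congr rfl fun u _ => Finset.sum_comm
        _ = ∑ j ∈ range J, ∑ u ∈ K, ∑ w ∈ K, ∑ T ∈ K.powerset,
            (W ((1/2 : ℝ)^(j+1)) K T * Phi G T u w) := Finset.sum_comm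
        _ = ∑ j ∈ range J, ∑ u ∈ K, ∑ T ∈ K.powerset, ∑ w ∈ K,
            (W ((1/2 : ℝ)^(j+1)) K T * Phi G T u w) :=
            Finset.sum_congr rfl fun j _ => Finset.sum_congr rfl fun u _ => Finset.sum_comm
        _ = ∑ j ∈ range J, ∑ T ∈ K.powerset, ∑ u ∈ K, ∑ w ∈ K,
            (W ((1/2 : ℝ)^(j+1)) K T * Phi G T u w) :=
            Finset.sum_congr rfl fun j _ => Finset.sum_comm
    calc (1/24 : ℝ) * (∑ u ∈ K, ∑ w ∈ K, ((G.dist u w / 3 : ℕ) : ℝ))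
        = ∑ u ∈ K, ∑ w ∈ K, (1/24 : ℝ) * ((G.dist u w / 3 : ℕ) : ℝ) := by
          rw [Finset.mul_sum]
          refine Finset.sum_congr rfl fun u _ => ?_
          rw [Finset.mul_sum]
      _ ≤ ∑ u ∈ K, ∑ w ∈ K, ∑ j ∈ range J, ∑ T ∈ K.powerset,
            (W ((1/2 : ℝ)^(j+1)) K T * Phi G T u w) :=
          Finset.sum_le_sum fun u hu => Finset.sum_le_sum fun w hw => stepB u hu w hw
      _ = ∑ j ∈ range J, ∑ T ∈ K.powerset, ∑ u ∈ K, ∑ w ∈ K,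
            (W ((1/2 : ℝ)^(j+1)) K T * Phi G T u w) := hexch
      _ ≤ ∑ _j ∈ range J, 2 * (K.card : ℝ) * X := Finset.sum_le_sum fun j _ => stepA j
      _ = (J : ℝ) * (2 * (K.card : ℝ) * X) := by
          rw [Finset.sum_const, Finset.card_range, nsmul_eq_mul]
  -- Step D : lower bounds for the pair sums
  have capD : ∀ u w : V, (G.dist u w : ℝ) - 2 ≤ 3 * ((G.dist u w / 3 : ℕ) : ℝ) := by
    intro u w
    have h1 : G.dist u w ≤ 3 * (G.dist u w / 3) + 2 := by omega
    have h2 : (G.dist u w : ℝ) ≤ 3 * ((G.dist u w / 3 : ℕ) : ℝ) + 2 := by exact_mod_cast h1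
    linarith
  have hsigma : (K.card : ℝ) * (sigmaK G K : ℝ) ≤ ∑ u ∈ K, ∑ w ∈ K, (G.dist u w : ℝ) := by
    have hs : ∀ u ∈ K, (sigmaK G K : ℝ) ≤ ∑ w ∈ K, (G.dist u w : ℝ) := by
      intro u _
      have h := Nat.sInf_le (show (∑ w ∈ K, G.dist u w) ∈
        { n | ∃ v : V, n = ∑ w ∈ K, G.dist v w } from ⟨u, rfl⟩)
      calc (sigmaK G K : ℝ) ≤ ((∑ w ∈ K, G.dist u w : ℕ) : ℝ) := Nat.cast_le.mpr h
        _ = ∑ w ∈ K, (G.dist u w : ℝ) := by push_cast; rfl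
    calc (K.card : ℝ) * (sigmaK G K : ℝ) = ∑ _u ∈ K, (sigmaK G K : ℝ) := by
          rw [Finset.sum_const, nsmul_eq_mul]
      _ ≤ ∑ u ∈ K, ∑ w ∈ K, (G.dist u w : ℝ) := Finset.sum_le_sum hs
  have hconst : ∑ u ∈ K, ∑ w ∈ K, ((G.dist u w : ℝ) - 2)
      = (∑ u ∈ K, ∑ w ∈ K, (G.dist u w : ℝ)) - 2 * (K.card : ℝ)^2 := by
    rw [Finset.sum_congr rfl fun u (_ : u ∈ K) => Finset.sum_sub_distrib _ _, Finset.sum_sub_distrib]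
    simp only [Finset.sum_const, nsmul_eq_mul]
    ring
  have hsum2 : (∑ u ∈ K, ∑ w ∈ K, (G.dist u w : ℝ)) - 2 * (K.card : ℝ)^2
      ≤ 3 * ∑ u ∈ K, ∑ w ∈ K, ((G.dist u w / 3 : ℕ) : ℝ) := by
    rw [← hconst, Finset.mul_sum]
    refine Finset.sum_le_sum fun u _ => ?_
    rw [Finset.mul_sum]
    exact Finset.sum_le_sum fun w _ => capD u w
  -- logarithm bounds
  have hlog1 : (1:ℝ) ≤ Real.logb 2 (K.card : ℝ) := by
    have h2 : Real.logb 2 (2:ℝ) ≤ Real.logb 2 (K.card : ℝ) :=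
      Real.logb_le_logb_of_le (by norm_num) (by norm_num) (by exact_mod_cast hK)
    rwa [Real.logb_self_eq_one (by norm_num)] at h2
  have hJlog : (J : ℝ) ≤ 2 * Real.logb 2 (K.card : ℝ) := by
    have hlt : 2 ^ (J - 1) < K.card := Nat.pow_pred_clog_lt_self (by norm_num) hK
    have hlt' : ((2:ℝ)) ^ (J - 1 : ℕ) ≤ (K.card : ℝ) := by exact_mod_cast le_of_lt hlt
    have hlogpow : Real.logb 2 ((2:ℝ) ^ (J - 1 : ℕ)) = ((J - 1 : ℕ) : ℝ) := by
      rw [Real.logb_pow, Real.logb_self_eq_one (by norm_num)]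
      ring
    have hmono : Real.logb 2 ((2:ℝ) ^ (J - 1 : ℕ)) ≤ Real.logb 2 (K.card : ℝ) :=
      Real.logb_le_logb_of_le (by norm_num) (by positivity) hlt'
    have hcast : ((J - 1 : ℕ) : ℝ) = (J : ℝ) - 1 := by
      rw [Nat.cast_sub hJ1, Nat.cast_one]
    rw [hlogpow, hcast] at hmono
    linarith
  -- final arithmetic
  have hkX := singleton_bound hK x hx0 hxC
  rw [← hX] at hkX
  set L := Real.logb 2 (K.card : ℝ) with hL
  set k : ℝ := (K.card : ℝ) with hkdef
  have hk0 : (0:ℝ) < k := by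
    rw [hkdef]
    have : (0:ℕ) < K.card := by omega
    exact_mod_cast this
  set P := ∑ u ∈ K, ∑ w ∈ K, ((G.dist u w / 3 : ℕ) : ℝ) with hP
  set Sd := ∑ u ∈ K, ∑ w ∈ K, (G.dist u w : ℝ) with hSd
  have h1 : P ≤ 48 * (J:ℝ) * k * X := by nlinarith [stepC]
  have h2 : k * (sigmaK G K : ℝ) ≤ 144 * (J:ℝ) * k * X + 2 * k^2 := by nlinarith [hsigma, hsum2, h1]
  have h3 : k^2 ≤ 2 * k * X := by nlinarith [hkX, hk0]
  have h4 : k * (sigmaK G K : ℝ) ≤ k * (144 * (J:ℝ) * X + 4 * X) := by nlinarith [h2, h3]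
  have h5 : (sigmaK G K : ℝ) ≤ 144 * (J:ℝ) * X + 4 * X := le_of_mul_le_mul_left (by linarith [h4]) hk0
  have hJX : (J:ℝ) * X ≤ 2 * L * X := by
    have := mul_le_mul_of_nonneg_right hJlog hX0
    linarith
  nlinarith [h5, hJX, mul_nonneg (sub_nonneg.mpr hlog1) hX0]

end S7

/-- There is an absolute constant `c > 0` such that for every finite connected
simple graph `G` and every `K ⊆ V` with `|K| = k ≥ 2`,
`LP_MDN(G,K) ≥ c · σ_K(G) / log₂ k`. -/
theorem statement7 :
    ∃ c : ℝ, 0 < c ∧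
      ∀ (V : Type) [Fintype V] [DecidableEq V] (G : SimpleGraph V),
        G.Connected →
        ∀ K : Finset V, 2 ≤ K.card →
          c * (sigmaK G K : ℝ) / Real.logb 2 (K.card : ℝ) ≤ LPMDN G K := by
  refine ⟨1/296, by norm_num, ?_⟩
  intro V _ _ G hG K hK
  rw [LPMDN]
  refine le_csInf ?_ ?_
  · refine ⟨∑ e ∈ G.edgeFinset, (K.card : ℝ), fun _ => (K.card : ℝ),
      fun e => Nat.cast_nonneg _, ?_, rfl⟩
    intro C hC
    obtain ⟨a, b, hadj, ha, hb⟩ := S7.exists_cross_edge hG hC.1 hC.2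
    have hmem : s(a, b) ∈ cutEdges G C :=
      Finset.mem_filter.mpr ⟨SimpleGraph.mem_edgeFinset.mpr hadj, ⟨a, b, rfl, ha, hb⟩⟩
    calc (min ((K ∩ C).card : ℝ) ((K \ C).card : ℝ))
        ≤ ((K ∩ C).card : ℝ) := min_le_left _ _
      _ ≤ (K.card : ℝ) := Nat.cast_le.mpr (Finset.card_le_card Finset.inter_subset_left)
      _ ≤ ∑ _e ∈ cutEdges G C, (K.card : ℝ) :=
          Finset.single_le_sum (f := fun _ => (K.card : ℝ))
            (fun e _ => Nat.cast_nonneg _) hmem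
  · rintro y ⟨x, hx0, hxC, rfl⟩
    have hkey := S7.key_bound hG hK x hx0 hxC
    have hlog1 : (1:ℝ) ≤ Real.logb 2 (K.card : ℝ) := by
      have h2 : Real.logb 2 (2:ℝ) ≤ Real.logb 2 (K.card : ℝ) :=
        Real.logb_le_logb_of_le (by norm_num) (by norm_num) (by exact_mod_cast hK)
      rwa [Real.logb_self_eq_one (by norm_num)] at h2
    rw [div_le_iff₀ (by linarith : (0:ℝ) < Real.logb 2 (K.card : ℝ))]
    linarith [hkey]
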